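/- For every t ≥ 3 and n ≥ 2 with (t,n) ≠ (3,2), there exists a balanced t-coloring of C_t^n with no rainbow geometric line. -/

import Mathlib

open Finset

/-! ### Auxiliary definitions for the coloring (case `t ≥ 4`) -/

/-- The coloring pattern for `t ≥ 4`: rows `0,1` follow `h`, row `2` follows `h'`,
row `a ≥ 3` is constantly `a`. -/
def gv (t a b : ℕ) : ℕ :=
  if a ≤ 1 then (if b < t/2 then 0 else if b < t-1 then 1 else 2)
  else if a = 2 then (if b < t%2 then 0 else if b < 2 then 1 else 2)
  else a

/-- Number of cells of color `cv` in row `a`. -/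
def rowc (t a cv : ℕ) : ℕ :=
  if a ≤ 1 then (if cv = 0 then t/2 else if cv = 1 then t-1-(t/2) else if cv = 2 then 1 else 0)
  else if a = 2 then (if cv = 0 then t%2 else if cv = 1 then 2 - t%2 else if cv = 2 then t-2 else 0)
  else (if cv = a then t else 0)

lemma gv_lt (t a b : ℕ) (ha : a < t) (ht : 4 ≤ t) : gv t a b < t := by
  unfold gv; split_ifs <;> omega

/-! ### Counting lemmas -/

lemma count_firstk (t n k : ℕ) (hk : k ≤ n) (p : (Fin k → Fin t) → Prop) [DecidablePred p] :
    (Finset.univ.filter fun x : Fin n → Fin t => p (fun j => x (Fin.castLE hk j))).card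
      = (Finset.univ.filter p).card * t ^ (n - k) := by
  have h1 : ((Finset.univ.filter p) ×ˢ (Finset.univ : Finset (Fin (n-k) → Fin t))).card
      = (Finset.univ.filter p).card * t ^ (n - k) := by
    rw [Finset.card_product, Finset.card_univ, Fintype.card_fun, Fintype.card_fin, Fintype.card_fin]
  rw [← h1]
  apply Finset.card_nbij' (i := fun x => ((fun j => x (Fin.castLE hk j)),
      (fun j : Fin (n-k) => x ⟨k + j.val, by omega⟩)))
    (j := fun q => fun i : Fin n => if h : i.val < k then q.1 ⟨i.val, h⟩ else q.2 ⟨i.val - k, by omega⟩)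
  · intro x hx
    simp only [Finset.mem_coe, Finset.mem_filter, Finset.mem_univ, true_and] at hx ⊢
    simp only [Finset.mem_coe, Finset.mem_product, Finset.mem_filter, Finset.mem_univ, true_and]
    exact ⟨hx, trivial⟩
  · intro q hq
    simp only [Finset.mem_coe, Finset.mem_product, Finset.mem_filter, Finset.mem_univ, true_and] at hq
    simp only [Finset.mem_coe, Finset.mem_filter, Finset.mem_univ, true_and]
    have : (fun j : Fin k => (fun i : Fin n => if h : i.val < k then q.1 ⟨i.val, h⟩
        else q.2 ⟨i.val - k, by omega⟩) (Fin.castLE hk j)) = q.1 := by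
      funext j
      simp only [Fin.castLE]
      rw [dif_pos j.isLt]
    rw [this]; exact hq.1
  · intro x _
    funext i
    by_cases h : i.val < k
    · simp only [dif_pos h]
      congr 1
    · simp only [dif_neg h]
      congr 1
      apply Fin.ext
      show k + (i.val - k) = i.val
      omega
  · intro q _
    refine Prod.ext ?_ ?_
    · funext j
      simp only [Fin.castLE]
      rw [dif_pos j.isLt]
    · funext j
      have hnl : ¬ (k + j.val < k) := by omega
      have he : k + j.val - k = j.val := by omega
      simp only [dif_neg hnl, he, Fin.eta]

lemma count_Ico (t l r : ℕ) (ht : 0 < t) (hr : r ≤ t) :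
    (Finset.univ.filter fun b : Fin t => l ≤ b.val ∧ b.val < r).card = r - l := by
  rcases le_or_gt l r with h | h
  · have : r - l = (Finset.Ico l r).card := by rw [Nat.card_Ico]
    rw [this]
    apply Finset.card_nbij' (i := fun b : Fin t => b.val)
      (j := fun m => ⟨m % t, Nat.mod_lt _ (by omega)⟩)
    · intro b hb; simp only [Finset.mem_coe, Finset.mem_filter, Finset.mem_univ, true_and] at hb
      simp only [Finset.mem_coe, Finset.mem_Ico]; omega
    · intro m hm; simp only [Finset.mem_coe, Finset.mem_Ico] at hm
      simp only [Finset.mem_coe, Finset.mem_filter, Finset.mem_univ, true_and]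
      have : m % t = m := Nat.mod_eq_of_lt (by omega)
      rw [this]; omega
    · intro b hb
      apply Fin.ext
      show b.val % t = b.val
      exact Nat.mod_eq_of_lt b.isLt
    · intro m hm; simp only [Finset.mem_coe, Finset.mem_Ico] at hm
      show m % t = m
      exact Nat.mod_eq_of_lt (by omega)
  · have : (Finset.univ.filter fun b : Fin t => l ≤ b.val ∧ b.val < r) = ∅ := by
      apply Finset.filter_false_of_mem
      intro b _; omega
    rw [this]; simp; omega

lemma count_pred_eq (t l r : ℕ) (ht : 0 < t) (hr : r ≤ t) (p : Fin t → Prop) [DecidablePred p]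
    (h : ∀ b : Fin t, p b ↔ (l ≤ b.val ∧ b.val < r)) :
    (Finset.univ.filter p).card = r - l := by
  rw [Finset.filter_congr (fun b _ => h b), count_Ico t l r ht hr]

lemma row_count (t : ℕ) (ht4 : 4 ≤ t) (a : Fin t) (cv : ℕ) :
    (Finset.univ.filter fun b : Fin t => gv t a.val b.val = cv).card = rowc t a.val cv := by
  have ht0 : 0 < t := by omega
  have hat := a.isLt
  unfold rowc
  by_cases h1 : a.val ≤ 1
  · rw [if_pos h1]
    by_cases hc0 : cv = 0
    · have h := count_pred_eq t 0 (t/2) ht0 (by omega) (p := fun b : Fin t => gv t a.val b.val = cv)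
        (fun b => by show gv t a.val b.val = cv ↔ _; unfold gv; split_ifs <;> omega)
      rw [h]; simp [hc0]; try omega
    · by_cases hc1 : cv = 1
      · have h := count_pred_eq t (t/2) (t-1) ht0 (by omega) (p := fun b : Fin t => gv t a.val b.val = cv)
          (fun b => by show gv t a.val b.val = cv ↔ _; unfold gv; split_ifs <;> omega)
        rw [h]; simp [hc0, hc1]
      · by_cases hc2 : cv = 2
        · have h := count_pred_eq t (t-1) t ht0 (by omega) (p := fun b : Fin t => gv t a.val b.val = cv)
            (fun b => by show gv t a.val b.val = cv ↔ _; unfold gv; split_ifs <;> omega)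
          rw [h]; simp [hc0, hc1, hc2]; try omega
        · have h := count_pred_eq t 0 0 ht0 (by omega) (p := fun b : Fin t => gv t a.val b.val = cv)
            (fun b => by show gv t a.val b.val = cv ↔ _; unfold gv; split_ifs <;> omega)
          rw [h]; simp [hc0, hc1, hc2]
  · rw [if_neg h1]
    by_cases h2 : a.val = 2
    · rw [if_pos h2]
      by_cases hc0 : cv = 0
      · have h := count_pred_eq t 0 (t%2) ht0 (by omega) (p := fun b : Fin t => gv t a.val b.val = cv)
          (fun b => by show gv t a.val b.val = cv ↔ _; unfold gv; split_ifs <;> omega)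
        rw [h]; simp [hc0]
      · by_cases hc1 : cv = 1
        · have h := count_pred_eq t (t%2) 2 ht0 (by omega) (p := fun b : Fin t => gv t a.val b.val = cv)
            (fun b => by show gv t a.val b.val = cv ↔ _; unfold gv; split_ifs <;> omega)
          rw [h]; simp [hc0, hc1]
        · by_cases hc2 : cv = 2
          · have h := count_pred_eq t 2 t ht0 (by omega) (p := fun b : Fin t => gv t a.val b.val = cv)
              (fun b => by show gv t a.val b.val = cv ↔ _; unfold gv; split_ifs <;> omega)
            rw [h]; simp [hc0, hc1, hc2]
          · have h := count_pred_eq t 0 0 ht0 (by omega) (p := fun b : Fin t => gv t a.val b.val = cv)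
              (fun b => by show gv t a.val b.val = cv ↔ _; unfold gv; split_ifs <;> omega)
            rw [h]; simp [hc0, hc1, hc2]
    · rw [if_neg h2]
      by_cases hca : cv = a.val
      · have h := count_pred_eq t 0 t ht0 (by omega) (p := fun b : Fin t => gv t a.val b.val = cv)
          (fun b => by show gv t a.val b.val = cv ↔ _; unfold gv; split_ifs <;> omega)
        rw [h]; simp [hca]; try omega
      · have h := count_pred_eq t 0 0 ht0 (by omega) (p := fun b : Fin t => gv t a.val b.val = cv)
          (fun b => by show gv t a.val b.val = cv ↔ _; unfold gv; split_ifs <;> omega)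
        rw [h]; simp [hca]

lemma sum_rowc (t : ℕ) (ht4 : 4 ≤ t) (cv : ℕ) (hcv : cv < t) :
    (∑ a : Fin t, rowc t a.val cv) = t := by
  rw [← Finset.sum_filter_add_sum_filter_not Finset.univ (fun a : Fin t => a.val ≤ 2)]
  have hset : Finset.univ.filter (fun a : Fin t => a.val ≤ 2)
      = {(⟨0, by omega⟩ : Fin t), ⟨1, by omega⟩, ⟨2, by omega⟩} := by
    ext a
    simp only [Finset.mem_filter, Finset.mem_univ, true_and, Finset.mem_insert,
      Finset.mem_singleton, Fin.ext_iff]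
    omega
  have hrest : (∑ a ∈ Finset.univ.filter (fun a : Fin t => ¬ a.val ≤ 2), rowc t a.val cv)
      = if 3 ≤ cv then t else 0 := by
    by_cases h3 : 3 ≤ cv
    · rw [if_pos h3]
      have heq : ∀ a ∈ Finset.univ.filter (fun a : Fin t => ¬ a.val ≤ 2),
          rowc t a.val cv = if a = (⟨cv, hcv⟩ : Fin t) then t else 0 := by
        intro a ha
        simp only [Finset.mem_filter, Finset.mem_univ, true_and] at ha
        unfold rowc
        have : (a = (⟨cv, hcv⟩ : Fin t)) ↔ cv = a.val := by
          rw [Fin.ext_iff]; show a.val = cv ↔ _; constructor <;> omega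
        rw [if_neg (by omega), if_neg (by omega)]
        by_cases hca : cv = a.val
        · rw [if_pos hca, if_pos (this.mpr hca)]
        · rw [if_neg hca, if_neg (fun hh => hca (this.mp hh))]
      rw [Finset.sum_congr rfl heq, Finset.sum_ite_eq' _ (⟨cv, hcv⟩ : Fin t)]
      rw [if_pos]
      simp only [Finset.mem_filter, Finset.mem_univ, true_and]
      omega
    · rw [if_neg h3]
      apply Finset.sum_eq_zero
      intro a ha
      simp only [Finset.mem_filter, Finset.mem_univ, true_and] at ha
      unfold rowc
      split_ifs <;> omega
  rw [hrest, hset]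
  rw [Finset.sum_insert (by simp [Fin.ext_iff]), Finset.sum_insert (by simp [Fin.ext_iff]),
    Finset.sum_singleton]
  show rowc t 0 cv + (rowc t 1 cv + rowc t 2 cv) + _ = t
  unfold rowc
  split_ifs <;> omega

lemma sq_count (t : ℕ) (ht4 : 4 ≤ t) (cv : ℕ) (hcv : cv < t) :
    (Finset.univ.filter fun y : Fin 2 → Fin t => gv t (y 0).val (y 1).val = cv).card = t := by
  rw [Finset.card_eq_sum_card_fiberwise
    (f := fun y : Fin 2 → Fin t => y 0) (t := Finset.univ) (fun x _ => Finset.mem_univ _)]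
  conv_rhs => rw [← sum_rowc t ht4 cv hcv]
  apply Finset.sum_congr rfl
  intro a _
  rw [← row_count t ht4 a cv]
  apply Finset.card_nbij' (i := fun y : Fin 2 → Fin t => y 1)
    (j := fun b : Fin t => fun i : Fin 2 => if i.val = 0 then a else b)
  · intro y hy
    simp only [Finset.mem_coe, Finset.mem_filter, Finset.mem_univ, true_and] at hy ⊢
    rw [← hy.2]; exact hy.1
  · intro b hb
    simp only [Finset.mem_coe, Finset.mem_filter, Finset.mem_univ, true_and] at hb ⊢
    exact ⟨hb, rfl⟩
  · intro y hy
    simp only [Finset.mem_coe, Finset.mem_filter, Finset.mem_univ, true_and] at hy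
    funext i
    fin_cases i
    · show (if (0:ℕ) = 0 then a else y 1) = y 0
      rw [if_pos rfl]; exact hy.2.symm
    · show (if (1:ℕ) = 0 then a else y 1) = y 1
      rw [if_neg (by omega)]
  · intro b _
    rfl

/-! ### The case `t = 3` -/

/-- An explicit balanced rainbow-free coloring pattern on `(Fin 3)^3`. -/
def g3 : Fin 3 → Fin 3 → Fin 3 → Fin 3 := fun a b c =>
  ![![![2,0,0],![0,0,0],![2,2,2]],
    ![![1,2,1],![0,1,1],![0,2,2]],
    ![![2,2,1],![0,1,1],![0,1,1]]] a b c

/-- The five possible coordinate patterns of a geometric line over `Fin 3`. -/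
def pat5 (p : Fin 5) : Fin 3 → Fin 3 := fun i =>
  if h : p.val ≤ 2 then ⟨p.val, by omega⟩ else if p.val = 3 then i else ⟨2 - i.val, by omega⟩

lemma t3_count : ∀ c : Fin 3,
    (Finset.univ.filter fun y : Fin 3 → Fin 3 => g3 (y 0) (y 1) (y 2) = c).card = 9 := by
  decide

lemma t3_main : ∀ p q r : Fin 5, ∃ i i' : Fin 3, i ≠ i' ∧
    g3 (pat5 p i) (pat5 q i) (pat5 r i) = g3 (pat5 p i') (pat5 q i') (pat5 r i') := by
  decide

lemma pat_of (u : Fin 3 → Fin 3)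
    (h : (∀ i i', u i = u i') ∨ (∀ i : Fin 3, (u i).val = i.val) ∨
      (∀ i : Fin 3, (u i).val = 3 - 1 - i.val)) :
    ∃ p : Fin 5, ∀ i, u i = pat5 p i := by
  rcases h with h | h | h
  · refine ⟨⟨(u 0).val, by omega⟩, fun i => ?_⟩
    unfold pat5
    rw [dif_pos (show ((⟨(u 0).val, by omega⟩ : Fin 5)).val ≤ 2 by
      show (u 0).val ≤ 2; omega)]
    rw [h i 0]
  · refine ⟨⟨3, by omega⟩, fun i => ?_⟩
    unfold pat5
    rw [dif_neg (by show ¬ (3:ℕ) ≤ 2; omega), if_pos (by show (3:ℕ) = 3; rfl)]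
    exact Fin.ext (h i)
  · refine ⟨⟨4, by omega⟩, fun i => ?_⟩
    unfold pat5
    rw [dif_neg (by show ¬ (4:ℕ) ≤ 2; omega), if_neg (by show ¬ (4:ℕ) = 3; omega)]
    exact Fin.ext (h i)



/-- A geometric line in the `n`-cube over `t` elements: a sequence of `t`
distinct points such that in each coordinate `j`, either all points agree,
or the `j`-th coordinate of the `i`-th point is `i`, or is `t-1-i`. -/
def IsGeomLine (t n : ℕ) (ℓ : Fin t → Fin n → Fin t) : Prop :=
  Function.Injective ℓ ∧
    ∀ j : Fin n,
      (∀ i i' : Fin t, ℓ i j = ℓ i' j) ∨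
      (∀ i : Fin t, (ℓ i j : ℕ) = (i : ℕ)) ∨
      (∀ i : Fin t, (ℓ i j : ℕ) = t - 1 - (i : ℕ))

set_option maxHeartbeats 2000000 in
/-- For every `t ≥ 3` and `n ≥ 2` with `(t,n) ≠ (3,2)`, there is a balanced
`t`-coloring of `C_t^n` (each color class of size `t^(n-1)`) with no rainbow
geometric line. -/
theorem stmt10 (t n : ℕ) (ht : 3 ≤ t) (hn : 2 ≤ n) (hex : ¬(t = 3 ∧ n = 2)) :
    ∃ f : (Fin n → Fin t) → Fin t,
      (∀ c : Fin t,
        (Finset.univ.filter (fun x => f x = c)).card = t ^ (n - 1)) ∧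
      (∀ ℓ : Fin t → Fin n → Fin t, IsGeomLine t n ℓ →
        ¬ Function.Injective (f ∘ ℓ)) := by
  rcases le_or_gt 4 t with ht4 | hlt
  · -- the case t ≥ 4
    have h2n : 2 ≤ n := hn
    refine ⟨fun x => ⟨gv t (x (Fin.castLE h2n 0)).val (x (Fin.castLE h2n 1)).val,
      gv_lt t _ _ (Fin.is_lt _) ht4⟩, ?_, ?_⟩
    · intro c
      have e1 : (Finset.univ.filter fun x : Fin n → Fin t =>
          (⟨gv t (x (Fin.castLE h2n 0)).val (x (Fin.castLE h2n 1)).val,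
            gv_lt t _ _ (Fin.is_lt _) ht4⟩ : Fin t) = c)
          = (Finset.univ.filter fun x : Fin n → Fin t =>
            (fun y : Fin 2 → Fin t => gv t (y 0).val (y 1).val = c.val)
              (fun j => x (Fin.castLE h2n j))) := by
        apply Finset.filter_congr
        intro x _
        show _ ↔ gv t (x (Fin.castLE h2n 0)).val (x (Fin.castLE h2n 1)).val = c.val
        rw [Fin.ext_iff]
      rw [e1, count_firstk t n 2 h2n (fun y : Fin 2 → Fin t => gv t (y 0).val (y 1).val = c.val),
        sq_count t ht4 c.val c.isLt, show n - 1 = (n-2)+1 by omega, pow_succ]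
      exact mul_comm _ _
    · intro ℓ hline hinj
      obtain ⟨-, htri⟩ := hline
      have key : ∀ (a b : ℕ) (ha : a < t) (hb : b < t), a ≠ b →
          gv t (ℓ ⟨a, ha⟩ (Fin.castLE h2n 0)).val (ℓ ⟨a, ha⟩ (Fin.castLE h2n 1)).val
            = gv t (ℓ ⟨b, hb⟩ (Fin.castLE h2n 0)).val (ℓ ⟨b, hb⟩ (Fin.castLE h2n 1)).val →
          False := by
        intro a b ha hb hne he
        exact hne (congrArg Fin.val (hinj (a₁ := ⟨a, ha⟩) (a₂ := ⟨b, hb⟩) (Fin.ext he)))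
      rcases htri (Fin.castLE h2n 0) with hA | hA | hA
      · -- first coordinate constant
        have hA0 : ∀ i : Fin t, (ℓ i (Fin.castLE h2n 0)).val
            = (ℓ (⟨0, by omega⟩ : Fin t) (Fin.castLE h2n 0)).val :=
          fun i => congrArg Fin.val (hA i _)
        have hav := (ℓ (⟨0, by omega⟩ : Fin t) (Fin.castLE h2n 0)).isLt
        rcases htri (Fin.castLE h2n 1) with hB | hB | hB
        · have hB0 : ∀ i : Fin t, (ℓ i (Fin.castLE h2n 1)).val
              = (ℓ (⟨0, by omega⟩ : Fin t) (Fin.castLE h2n 1)).val :=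
            fun i => congrArg Fin.val (hB i _)
          refine key 0 1 (by omega) (by omega) (by omega) ?_
          simp only [hA0, hB0]
        · by_cases ha1 : (ℓ (⟨0, by omega⟩ : Fin t) (Fin.castLE h2n 0)).val ≤ 1
          · refine key 0 1 (by omega) (by omega) (by omega) ?_
            simp only [hA0, hB, Fin.val_mk]
            unfold gv; split_ifs <;> omega
          · by_cases ha2 : (ℓ (⟨0, by omega⟩ : Fin t) (Fin.castLE h2n 0)).val = 2
            · refine key 2 3 (by omega) (by omega) (by omega) ?_
              simp only [hA0, hB, Fin.val_mk]
              unfold gv; split_ifs <;> omega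
            · refine key 0 1 (by omega) (by omega) (by omega) ?_
              simp only [hA0, hB, Fin.val_mk]
              unfold gv; split_ifs <;> omega
        · by_cases ha1 : (ℓ (⟨0, by omega⟩ : Fin t) (Fin.castLE h2n 0)).val ≤ 1
          · refine key (t-2) (t-1) (by omega) (by omega) (by omega) ?_
            simp only [hA0, hB, Fin.val_mk]
            unfold gv; split_ifs <;> omega
          · refine key 0 1 (by omega) (by omega) (by omega) ?_
            simp only [hA0, hB, Fin.val_mk]
            unfold gv; split_ifs <;> omega
      · -- first coordinate increasing
        rcases htri (Fin.castLE h2n 1) with hB | hB | hB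
        · have hB0 : ∀ i : Fin t, (ℓ i (Fin.castLE h2n 1)).val
              = (ℓ (⟨0, by omega⟩ : Fin t) (Fin.castLE h2n 1)).val :=
            fun i => congrArg Fin.val (hB i _)
          refine key 0 1 (by omega) (by omega) (by omega) ?_
          simp only [hA, hB0, Fin.val_mk]
          unfold gv; split_ifs <;> omega
        · refine key 0 1 (by omega) (by omega) (by omega) ?_
          simp only [hA, hB, Fin.val_mk]
          unfold gv; split_ifs <;> omega
        · by_cases h5 : 5 ≤ t
          · refine key 0 2 (by omega) (by omega) (by omega) ?_
            simp only [hA, hB, Fin.val_mk]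
            unfold gv; split_ifs <;> omega
          · refine key 1 2 (by omega) (by omega) (by omega) ?_
            simp only [hA, hB, Fin.val_mk]
            unfold gv; split_ifs <;> omega
      · -- first coordinate decreasing
        rcases htri (Fin.castLE h2n 1) with hB | hB | hB
        · have hB0 : ∀ i : Fin t, (ℓ i (Fin.castLE h2n 1)).val
              = (ℓ (⟨0, by omega⟩ : Fin t) (Fin.castLE h2n 1)).val :=
            fun i => congrArg Fin.val (hB i _)
          refine key (t-2) (t-1) (by omega) (by omega) (by omega) ?_
          simp only [hA, hB0, Fin.val_mk]
          unfold gv; split_ifs <;> omega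
        · by_cases h5 : 5 ≤ t
          · refine key (t-3) (t-1) (by omega) (by omega) (by omega) ?_
            simp only [hA, hB, Fin.val_mk]
            unfold gv; split_ifs <;> omega
          · refine key (t-3) (t-2) (by omega) (by omega) (by omega) ?_
            simp only [hA, hB, Fin.val_mk]
            unfold gv; split_ifs <;> omega
        · refine key (t-2) (t-1) (by omega) (by omega) (by omega) ?_
          simp only [hA, hB, Fin.val_mk]
          unfold gv; split_ifs <;> omega
  · -- the case t = 3
    have ht3 : t = 3 := by omega
    subst ht3
    have h3n : 3 ≤ n := by
      have : n ≠ 2 := fun h => hex ⟨rfl, h⟩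
      omega
    refine ⟨fun x => g3 (x (Fin.castLE h3n 0)) (x (Fin.castLE h3n 1)) (x (Fin.castLE h3n 2)),
      ?_, ?_⟩
    · intro c
      have e1 : (Finset.univ.filter fun x : Fin n → Fin 3 =>
          g3 (x (Fin.castLE h3n 0)) (x (Fin.castLE h3n 1)) (x (Fin.castLE h3n 2)) = c)
          = (Finset.univ.filter fun x : Fin n → Fin 3 =>
            (fun y : Fin 3 → Fin 3 => g3 (y 0) (y 1) (y 2) = c)
              (fun j => x (Fin.castLE h3n j))) :=
        Finset.filter_congr (fun x _ => Iff.rfl)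
      rw [e1, count_firstk 3 n 3 h3n (fun y : Fin 3 → Fin 3 => g3 (y 0) (y 1) (y 2) = c),
        t3_count c, show (9:ℕ) = 3^2 by norm_num, ← pow_add,
        show 2 + (n - 3) = n - 1 by omega]
    · intro ℓ hline hinj
      obtain ⟨-, htri⟩ := hline
      obtain ⟨p, hp⟩ := pat_of (fun i => ℓ i (Fin.castLE h3n 0)) (htri _)
      obtain ⟨q, hq⟩ := pat_of (fun i => ℓ i (Fin.castLE h3n 1)) (htri _)
      obtain ⟨r, hr⟩ := pat_of (fun i => ℓ i (Fin.castLE h3n 2)) (htri _)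
      obtain ⟨i, i', hne, heq⟩ := t3_main p q r
      apply hne
      apply hinj
      show g3 (ℓ i (Fin.castLE h3n 0)) (ℓ i (Fin.castLE h3n 1)) (ℓ i (Fin.castLE h3n 2))
        = g3 (ℓ i' (Fin.castLE h3n 0)) (ℓ i' (Fin.castLE h3n 1)) (ℓ i' (Fin.castLE h3n 2))
      rw [hp i, hq i, hr i, hp i', hq i', hr i']
      exact heq
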